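/- In the Lie algebra 𝔛 generated by Z₁, Z₁₁, Z₂, Z₂₂, Z₁₂ modulo the relations [Z₁,Z₂]=[Z₁₁,Z₂]=[Z₁,Z₂₂]=0 and [Z₁₁,Z₂₂]=−[Z₁₁,Z₁₂]=[Z₂₂,Z₁₂]=−[Z₁−Z₂,Z₁₂], the Lie subalgebra 𝔛^{(1)} generated by {Z₁, Z₁₁, Z₁₂} satisfies [𝔛^{(1)}, 𝔛^{(2)}] ⊆ 𝔛^{(1)}, where 𝔛^{(2)} is the subalgebra generated by {Z₂, Z₂₂}. -/

import Mathlib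

open FreeLieAlgebra in
/-- The free Lie algebra on the five generators `Z₁, Z₁₁, Z₂, Z₂₂, Z₁₂`
(indexed by `0, 1, 2, 3, 4`). -/
abbrev KZ5.L := FreeLieAlgebra ℂ (Fin 5)

/-- The generators. -/
noncomputable def KZ5.e (i : Fin 5) : KZ5.L := FreeLieAlgebra.of ℂ i

open KZ5 in
/-- The set of defining relations of the infinitesimal pure braid Lie algebra `𝔛`:
`[Z₁,Z₂]`, `[Z₁₁,Z₂]`, `[Z₁,Z₂₂]`, `[Z₁₁,Z₂₂]+[Z₁₁,Z₁₂]`, `[Z₁₁,Z₂₂]+[Z₁₂,Z₂₂]`,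
`[Z₁₁,Z₂₂]+[Z₁−Z₂,Z₁₂]`, where `(Z₁,Z₁₁,Z₂,Z₂₂,Z₁₂) = (e 0, e 1, e 2, e 3, e 4)`. -/
noncomputable def KZ5.rels : Set KZ5.L :=
  {⁅e 0, e 2⁆, ⁅e 1, e 2⁆, ⁅e 0, e 3⁆,
   ⁅e 1, e 3⁆ + ⁅e 1, e 4⁆, ⁅e 1, e 3⁆ + ⁅e 4, e 3⁆, ⁅e 1, e 3⁆ + ⁅e 0 - e 2, e 4⁆}

/-- The Lie ideal generated by the relations. -/
noncomputable def KZ5.I : LieIdeal ℂ KZ5.L := LieSubmodule.lieSpan ℂ KZ5.L KZ5.rels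

/-- The infinitesimal pure braid Lie algebra `𝔛` of the formal 2KZ equation. -/
abbrev KZ5.X := KZ5.L ⧸ KZ5.I

/-- The images of the generators in `𝔛`. -/
noncomputable def KZ5.z (i : Fin 5) : KZ5.X := LieSubmodule.Quotient.mk (N := KZ5.I) (KZ5.e i)

open KZ5 in
/-- The Lie subalgebra `𝔛^{(1)}` generated by `{Z₁, Z₁₁, Z₁₂}`. -/
noncomputable def KZ5.X1 : LieSubalgebra ℂ KZ5.X :=
  LieSubalgebra.lieSpan ℂ KZ5.X {z 0, z 1, z 4}

open KZ5 in
/-- The Lie subalgebra `𝔛^{(2)}` generated by `{Z₂, Z₂₂}`. -/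
noncomputable def KZ5.X2 : LieSubalgebra ℂ KZ5.X :=
  LieSubalgebra.lieSpan ℂ KZ5.X {z 2, z 3}

/-- `[𝔛^{(1)}, 𝔛^{(2)}] ⊆ 𝔛^{(1)}`. -/


lemma KZ5.mk_rel {r : KZ5.L} (h : r ∈ KZ5.rels) :
    (LieSubmodule.Quotient.mk' KZ5.I) r = 0 :=
  (LieSubmodule.Quotient.mk_eq_zero KZ5.I).mpr (LieSubmodule.subset_lieSpan h)

lemma KZ5.mk_e (i : Fin 5) : (LieSubmodule.Quotient.mk' KZ5.I) (KZ5.e i) = KZ5.z i := rfl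

lemma KZ5.mk_br (a b : KZ5.L) :
    (LieSubmodule.Quotient.mk' KZ5.I) ⁅a, b⁆
      = ⁅(LieSubmodule.Quotient.mk' KZ5.I) a, (LieSubmodule.Quotient.mk' KZ5.I) b⁆ := rfl

lemma KZ5.z_mem_X1 : z 0 ∈ X1 ∧ z 1 ∈ X1 ∧ z 4 ∈ X1 :=
  ⟨LieSubalgebra.subset_lieSpan (by simp),
   LieSubalgebra.subset_lieSpan (by simp),
   LieSubalgebra.subset_lieSpan (by simp)⟩

lemma KZ5.rel02 : ⁅z 0, z 2⁆ = 0 := by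
  have := mk_rel (r := ⁅e 0, e 2⁆) (by simp [rels])
  rwa [mk_br, mk_e, mk_e] at this

lemma KZ5.rel12 : ⁅z 1, z 2⁆ = 0 := by
  have := mk_rel (r := ⁅e 1, e 2⁆) (by simp [rels])
  rwa [mk_br, mk_e, mk_e] at this

lemma KZ5.rel03 : ⁅z 0, z 3⁆ = 0 := by
  have := mk_rel (r := ⁅e 0, e 3⁆) (by simp [rels])
  rwa [mk_br, mk_e, mk_e] at this

lemma KZ5.rel134 : ⁅z 1, z 3⁆ + ⁅z 1, z 4⁆ = 0 := by
  have := mk_rel (r := ⁅e 1, e 3⁆ + ⁅e 1, e 4⁆) (by simp [rels])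
  rwa [map_add, mk_br, mk_br, mk_e, mk_e, mk_e] at this

lemma KZ5.rel143 : ⁅z 1, z 3⁆ + ⁅z 4, z 3⁆ = 0 := by
  have := mk_rel (r := ⁅e 1, e 3⁆ + ⁅e 4, e 3⁆) (by simp [rels])
  rwa [map_add, mk_br, mk_br, mk_e, mk_e, mk_e] at this

lemma KZ5.rel1304 : ⁅z 1, z 3⁆ + ⁅z 0, z 4⁆ - ⁅z 2, z 4⁆ = 0 := by
  have := mk_rel (r := ⁅e 1, e 3⁆ + ⁅e 0 - e 2, e 4⁆) (by simp [rels])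
  rw [sub_lie] at this
  rwa [map_add, map_sub, mk_br, mk_br, mk_br,
    mk_e, mk_e, mk_e, mk_e, mk_e, ← add_sub_assoc] at this

/-- For a fixed `w`, the set of `y ∈ X1` with `⁅w, y⁆ ∈ X1` is a Lie subalgebra. -/
noncomputable def KZ5.K (w : KZ5.X) : LieSubalgebra ℂ KZ5.X where
  carrier := {y | y ∈ X1 ∧ ⁅w, y⁆ ∈ X1}
  add_mem' := fun ha hb =>
    ⟨X1.add_mem ha.1 hb.1, by rw [lie_add]; exact X1.add_mem ha.2 hb.2⟩
  zero_mem' := ⟨X1.zero_mem, by rw [lie_zero]; exact X1.zero_mem⟩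
  smul_mem' := fun c a ha =>
    ⟨X1.smul_mem c ha.1, by rw [lie_smul]; exact X1.smul_mem c ha.2⟩
  lie_mem' := fun {a b} ha hb =>
    ⟨X1.lie_mem ha.1 hb.1, by
      rw [leibniz_lie]
      exact X1.add_mem (X1.lie_mem ha.2 hb.1) (X1.lie_mem ha.1 hb.2)⟩

lemma KZ5.w_normalizes (w : KZ5.X)
    (h0 : ⁅w, z 0⁆ ∈ X1) (h1 : ⁅w, z 1⁆ ∈ X1) (h4 : ⁅w, z 4⁆ ∈ X1) :
    w ∈ X1.normalizer := by
  rw [LieSubalgebra.mem_normalizer_iff]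
  intro y hy
  have hle : X1 ≤ K w := by
    rw [X1, LieSubalgebra.lieSpan_le]
    rintro x (rfl | rfl | rfl)
    · exact ⟨z_mem_X1.1, h0⟩
    · exact ⟨z_mem_X1.2.1, h1⟩
    · exact ⟨z_mem_X1.2.2, h4⟩
  exact (hle hy).2

lemma KZ5.z2_mem : z 2 ∈ X1.normalizer := by
  obtain ⟨g0, g1, g4⟩ := z_mem_X1
  apply w_normalizes
  · rw [← lie_skew, rel02, neg_zero]; exact X1.zero_mem
  · rw [← lie_skew, rel12, neg_zero]; exact X1.zero_mem
  · have h1 : ⁅z 2, z 4⁆ = ⁅z 0, z 4⁆ - ⁅z 1, z 4⁆ := by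
      linear_combination (norm := abel) -rel1304 + rel134
    rw [h1]
    exact X1.sub_mem (X1.lie_mem g0 g4) (X1.lie_mem g1 g4)

lemma KZ5.z3_mem : z 3 ∈ X1.normalizer := by
  obtain ⟨g0, g1, g4⟩ := z_mem_X1
  apply w_normalizes
  · rw [← lie_skew, rel03, neg_zero]; exact X1.zero_mem
  · have h : ⁅z 3, z 1⁆ = ⁅z 1, z 4⁆ := by
      rw [← lie_skew (z 3) (z 1)]
      linear_combination (norm := abel) -rel134
    rw [h]; exact X1.lie_mem g1 g4
  · have h : ⁅z 3, z 4⁆ = -⁅z 1, z 4⁆ := by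
      rw [← lie_skew (z 3) (z 4)]
      linear_combination (norm := abel) rel134 - rel143
    rw [h]
    exact X1.neg_mem (X1.lie_mem g1 g4)

open KZ5 in
theorem KZ5.bracket_X1_X2_subset_X1 :
    ∀ x ∈ KZ5.X1, ∀ y ∈ KZ5.X2, ⁅x, y⁆ ∈ KZ5.X1 := by
  intro x hx y hy
  have hle : X2 ≤ X1.normalizer := by
    rw [X2, LieSubalgebra.lieSpan_le]
    rintro w (rfl | rfl)
    · exact z2_mem
    · exact z3_mem
  have h := (LieSubalgebra.mem_normalizer_iff _ y).mp (hle hy) x hx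
  rw [← lie_skew]
  exact X1.neg_mem h
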